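/- Let n ≥ 1, let Ω = {x ∈ ℝ^n : x_i ≠ x_j for all i ≠ j}, let h_n(x) = ∏_{1≤i<j≤n}(x_j - x_i), and let c = (n(n-1)/2)·(1/2 + (n-2)/3). Then for every twice differentiable f : Ω → ℝ and every x ∈ Ω, (1/h_n(x)) · [ Σ_{i=1}^n (1/2)x_i²∂_{x_i}² + (1/2)Σ_{i=1}^n x_i∂_{x_i} ](h_n f)(x) - c·f(x) = (1/2) Σ_{i=1}^n (x_i∂_{x_i})² f(x) + Σ_{i=1}^n Σ_{j≠i} (x_i²/(x_i - x_j)) ∂_{x_i} f(x), where (x_i∂_{x_i})²f = x_i²∂_{x_i}²f + x_i∂_{x_i}f. That is, the quantum Calogero–Sutherland Hamiltonian at coupling θ = 1 coincides with the Doob h-transform by the Vandermonde determinant of the generator of n independent geometric Brownian motions with drift parameter 1/2, minus the eigenvalue c. -/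

import Mathlib

open Finset

-- second derivative product formula
lemma key_deriv_mul {P P1 P2 F : ℝ → ℝ} {a : ℝ}
    (hP : ∀ t, HasDerivAt P (P1 t) t) (hP1 : ∀ t, HasDerivAt P1 (P2 t) t)
    (hF : ∀ᶠ t in nhds a, DifferentiableAt ℝ F t)
    (hF' : DifferentiableAt ℝ (deriv F) a) :
    deriv (fun t => P t * F t) a = P1 a * F a + P a * deriv F a ∧
    iteratedDeriv 2 (fun t => P t * F t) a
      = P2 a * F a + 2 * (P1 a * deriv F a) + P a * deriv (deriv F) a := by
  have hFa : DifferentiableAt ℝ F a := hF.self_of_nhds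
  constructor
  · rw [deriv_fun_mul (hP a).differentiableAt hFa, (hP a).deriv]
  · have heq : deriv (fun t => P t * F t) =ᶠ[nhds a] fun t => P1 t * F t + P t * deriv F t := by
      filter_upwards [hF] with t ht
      rw [deriv_fun_mul (hP t).differentiableAt ht, (hP t).deriv]
    have h2 : iteratedDeriv 2 (fun t => P t * F t) a
        = deriv (deriv (fun t => P t * F t)) a := by
      simp [iteratedDeriv_succ, iteratedDeriv_one]
    rw [h2, heq.deriv_eq, deriv_fun_add ((hP1 a).differentiableAt.fun_mul hFa)
      ((hP a).differentiableAt.fun_mul hF'),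
      deriv_fun_mul (hP1 a).differentiableAt hFa, deriv_fun_mul (hP a).differentiableAt hF',
      (hP a).deriv, (hP1 a).deriv]
    ring

open Finset

lemma hasDerivAt_prod_linear {n : ℕ} (x : Fin n → ℝ) (s : Finset (Fin n)) (t : ℝ) :
    HasDerivAt (fun u => ∏ j ∈ s, (u - x j))
      (∑ j ∈ s, ∏ k ∈ s.erase j, (t - x k)) t := by
  have := HasDerivAt.fun_finsetProd (u := s) (f := fun j u => u - x j) (f' := fun _ => (1 : ℝ))
    (fun j _ => (hasDerivAt_id t).sub_const (x j))
  simpa using this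

lemma hasDerivAt_sum_prod_linear {n : ℕ} (x : Fin n → ℝ) (s : Finset (Fin n)) (t : ℝ) :
    HasDerivAt (fun u => ∑ j ∈ s, ∏ k ∈ s.erase j, (u - x k))
      (∑ j ∈ s, ∑ k ∈ s.erase j, ∏ l ∈ (s.erase j).erase k, (t - x l)) t :=
  HasDerivAt.fun_sum fun j _ => hasDerivAt_prod_linear x (s.erase j) t

open Finset

lemma vandermonde_update {n : ℕ} (x : Fin n → ℝ) (i : Fin n) :
    ∃ K : ℝ, ∀ t : ℝ,
      (∏ j : Fin n, ∏ k ∈ Finset.Iio j,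
        (Function.update x i t j - Function.update x i t k))
      = K * ∏ j ∈ Finset.univ.erase i, (t - x j) := by
  refine ⟨(-1 : ℝ) ^ (Finset.Ioi i).card *
      ∏ j ∈ Finset.univ.erase i, ∏ k ∈ (Finset.Iio j).erase i, (x j - x k), fun t => ?_⟩
  have herase : Finset.univ.erase i = Finset.Iio i ∪ Finset.Ioi i := by
    ext a
    simp only [Finset.mem_erase, Finset.mem_univ, and_true, Finset.mem_union,
      Finset.mem_Iio, Finset.mem_Ioi]
    exact ne_iff_lt_or_gt
  have hdisj : Disjoint (Finset.Iio i) (Finset.Ioi i) := by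
    rw [Finset.disjoint_left]
    intro a ha ha'
    exact absurd (Finset.mem_Iio.mp ha) (not_lt.mpr (le_of_lt (Finset.mem_Ioi.mp ha')))
  -- split the outer product at i
  rw [← Finset.mul_prod_erase Finset.univ _ (Finset.mem_univ i)]
  have h1 : ∏ k ∈ Finset.Iio i, (Function.update x i t i - Function.update x i t k)
      = ∏ k ∈ Finset.Iio i, (t - x k) := by
    refine Finset.prod_congr rfl fun k hk => ?_
    rw [Function.update_self, Function.update_of_ne (ne_of_lt (Finset.mem_Iio.mp hk)) _ _]
  have h2 : ∏ j ∈ Finset.univ.erase i, ∏ k ∈ Finset.Iio j,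
        (Function.update x i t j - Function.update x i t k)
      = ∏ j ∈ Finset.univ.erase i,
          ((if i < j then (x j - t) else 1) * ∏ k ∈ (Finset.Iio j).erase i, (x j - x k)) := by
    refine Finset.prod_congr rfl fun j hj => ?_
    have hji : j ≠ i := (Finset.mem_erase.mp hj).1
    have hupj : Function.update x i t j = x j := Function.update_of_ne hji _ _
    by_cases hij : i < j
    · rw [if_pos hij, ← Finset.mul_prod_erase (Finset.Iio j) _ (Finset.mem_Iio.mpr hij)]
      rw [hupj, Function.update_self]
      congr 1
      refine Finset.prod_congr rfl fun k hk => ?_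
      rw [Function.update_of_ne (Finset.mem_erase.mp hk).1 _ _]
    · rw [if_neg hij, one_mul,
        Finset.erase_eq_of_notMem (fun hc => hij (Finset.mem_Iio.mp hc))]
      refine Finset.prod_congr rfl fun k hk => ?_
      have hki : k ≠ i := by
        rintro rfl
        exact hij (Finset.mem_Iio.mp hk)
      rw [hupj, Function.update_of_ne hki _ _]
  rw [h1, h2, Finset.prod_mul_distrib, ← Finset.prod_filter]
  have hfil : (Finset.univ.erase i).filter (fun j => i < j) = Finset.Ioi i := by
    ext a
    simp only [Finset.mem_filter, Finset.mem_erase, Finset.mem_univ, and_true, Finset.mem_Ioi]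
    exact ⟨fun h => h.2, fun h => ⟨h.ne', h⟩⟩
  rw [hfil]
  have hneg : ∏ j ∈ Finset.Ioi i, (x j - t)
      = (-1 : ℝ) ^ (Finset.Ioi i).card * ∏ j ∈ Finset.Ioi i, (t - x j) := by
    rw [← Finset.prod_const, ← Finset.prod_mul_distrib]
    exact Finset.prod_congr rfl fun j _ => by ring
  rw [hneg, herase]
  simp only [Finset.prod_union hdisj]
  ring

open Finset

lemma pair_sum_expand {n : ℕ} (T : Fin n → Fin n → ℝ) :
    ∑ i : Fin n, ∑ j ∈ Finset.univ.erase i, T i j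
    = ∑ i : Fin n, ∑ j : Fin n, if i ≠ j then T i j else 0 := by
  refine Finset.sum_congr rfl fun i _ => ?_
  rw [← Finset.sum_erase Finset.univ (a := i)
    (f := fun j => if i ≠ j then T i j else 0) (by simp)]
  exact Finset.sum_congr rfl fun j hj => (if_pos (Finset.mem_erase.mp hj).1.symm).symm

lemma pair_swap {n : ℕ} (T : Fin n → Fin n → ℝ) :
    ∑ i : Fin n, ∑ j ∈ Finset.univ.erase i, T i j
    = ∑ i : Fin n, ∑ j ∈ Finset.univ.erase i, T j i := by
  rw [pair_sum_expand, pair_sum_expand (fun i j => T j i), Finset.sum_comm]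
  refine Finset.sum_congr rfl fun a _ => Finset.sum_congr rfl fun b _ => ?_
  exact if_congr ne_comm rfl rfl

lemma triple_sum_expand {n : ℕ} (T : Fin n → Fin n → Fin n → ℝ) :
    ∑ i : Fin n, ∑ j ∈ Finset.univ.erase i, ∑ k ∈ (Finset.univ.erase i).erase j, T i j k
    = ∑ i : Fin n, ∑ j : Fin n, ∑ k : Fin n,
        if i ≠ j ∧ i ≠ k ∧ j ≠ k then T i j k else 0 := by
  refine Finset.sum_congr rfl fun i _ => ?_
  rw [← Finset.sum_erase Finset.univ (a := i)
    (f := fun j => ∑ k : Fin n, if i ≠ j ∧ i ≠ k ∧ j ≠ k then T i j k else 0) (by simp)]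
  refine Finset.sum_congr rfl fun j hj => ?_
  have hji : j ≠ i := (Finset.mem_erase.mp hj).1
  rw [← Finset.sum_erase Finset.univ (a := i)
    (f := fun k => if i ≠ j ∧ i ≠ k ∧ j ≠ k then T i j k else 0) (by simp),
    ← Finset.sum_erase (Finset.univ.erase i) (a := j)
    (f := fun k => if i ≠ j ∧ i ≠ k ∧ j ≠ k then T i j k else 0) (by simp)]
  refine Finset.sum_congr rfl fun k hk => ?_
  have h1 := Finset.mem_erase.mp hk
  have hkj : k ≠ j := h1.1
  have hki : k ≠ i := (Finset.mem_erase.mp h1.2).1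
  exact (if_pos ⟨hji.symm, hki.symm, hkj.symm⟩).symm

lemma triple_reorder {n : ℕ} (F : Fin n → Fin n → Fin n → ℝ) :
    ∑ a : Fin n, ∑ b : Fin n, ∑ c : Fin n, F a b c
    = ∑ c : Fin n, ∑ a : Fin n, ∑ b : Fin n, F a b c := by
  rw [show (∑ a : Fin n, ∑ b : Fin n, ∑ c : Fin n, F a b c)
      = ∑ a : Fin n, ∑ c : Fin n, ∑ b : Fin n, F a b c from
    Finset.sum_congr rfl fun a _ => Finset.sum_comm]
  exact Finset.sum_comm

lemma triple_cycle {n : ℕ} (T : Fin n → Fin n → Fin n → ℝ) :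
    ∑ i : Fin n, ∑ j ∈ Finset.univ.erase i, ∑ k ∈ (Finset.univ.erase i).erase j, T i j k
    = ∑ i : Fin n, ∑ j ∈ Finset.univ.erase i, ∑ k ∈ (Finset.univ.erase i).erase j, T j k i := by
  rw [triple_sum_expand, triple_sum_expand (fun i j k => T j k i),
    triple_reorder (fun a b c => if a ≠ b ∧ a ≠ c ∧ b ≠ c then T a b c else 0)]
  refine Finset.sum_congr rfl fun i _ => Finset.sum_congr rfl fun j _ =>
    Finset.sum_congr rfl fun k _ => ?_
  refine if_congr ⟨fun ⟨h1, h2, h3⟩ => ⟨h2.symm, h3.symm, h1⟩,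
    fun ⟨h1, h2, h3⟩ => ⟨h3, h1.symm, h2.symm⟩⟩ rfl rfl
open Finset

section
variable {n : ℕ}

lemma two_term_identity {a b : ℝ} (hab : a ≠ b) : a / (a - b) + b / (b - a) = 1 := by
  have h1 : a - b ≠ 0 := sub_ne_zero.mpr hab
  have h2 : b - a ≠ 0 := sub_ne_zero.mpr hab.symm
  field_simp
  ring

lemma three_term_identity {a b c : ℝ} (hab : a ≠ b) (hac : a ≠ c) (hbc : b ≠ c) :
    a ^ 2 / ((a - b) * (a - c)) + b ^ 2 / ((b - c) * (b - a)) + c ^ 2 / ((c - a) * (c - b)) = 1 := by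
  have h1 : a - b ≠ 0 := sub_ne_zero.mpr hab
  have h2 : a - c ≠ 0 := sub_ne_zero.mpr hac
  have h3 : b - c ≠ 0 := sub_ne_zero.mpr hbc
  have h4 : b - a ≠ 0 := sub_ne_zero.mpr hab.symm
  have h5 : c - a ≠ 0 := sub_ne_zero.mpr hac.symm
  have h6 : c - b ≠ 0 := sub_ne_zero.mpr hbc.symm
  field_simp
  ring

lemma card_sum_pairs (n : ℕ) :
    ∑ i : Fin n, ∑ _j ∈ Finset.univ.erase i, (1 : ℝ) = (n : ℝ) * ((n : ℝ) - 1) := by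
  rcases Nat.eq_zero_or_pos n with rfl | hn
  · simp
  · simp only [Finset.sum_const, nsmul_eq_mul, mul_one, Finset.card_erase_of_mem
      (Finset.mem_univ _), Finset.card_univ, Fintype.card_fin]
    rw [Nat.cast_sub hn]
    push_cast
    ring
end

lemma card_sum_triples (n : ℕ) :
    ∑ i : Fin n, ∑ j ∈ Finset.univ.erase i, ∑ _k ∈ (Finset.univ.erase i).erase j, (1 : ℝ)
    = (n : ℝ) * ((n : ℝ) - 1) * ((n : ℝ) - 2) := by
  match n with
  | 0 => simp
  | 1 => norm_num
  | (m + 2) =>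
    have key : ∀ i : Fin (m + 2), ∀ j ∈ Finset.univ.erase i,
        (((Finset.univ.erase i).erase j).card : ℝ) = (m : ℝ) := by
      intro i j hj
      rw [Finset.card_erase_of_mem hj, Finset.card_erase_of_mem (Finset.mem_univ i),
        Finset.card_univ, Fintype.card_fin]
      norm_num
    calc ∑ i : Fin (m+2), ∑ j ∈ Finset.univ.erase i,
            ∑ _k ∈ (Finset.univ.erase i).erase j, (1 : ℝ)
        = ∑ i : Fin (m+2), ∑ j ∈ Finset.univ.erase i, (m : ℝ) := by
          refine Finset.sum_congr rfl fun i _ => Finset.sum_congr rfl fun j hj => ?_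
          rw [Finset.sum_const, nsmul_eq_mul, mul_one]
          exact key i j hj
      _ = ∑ _i : Fin (m+2), ((m : ℝ) + 1) * (m : ℝ) := by
          refine Finset.sum_congr rfl fun i _ => ?_
          rw [Finset.sum_const, nsmul_eq_mul, Finset.card_erase_of_mem (Finset.mem_univ i),
            Finset.card_univ, Fintype.card_fin]
          push_cast
          ring
      _ = ((m : ℝ) + 2) * ((m : ℝ) + 1) * (m : ℝ) := by
          rw [Finset.sum_const, nsmul_eq_mul, Finset.card_univ, Fintype.card_fin]
          push_cast
          ring
      _ = ((m + 2 : ℕ) : ℝ) * (((m + 2 : ℕ) : ℝ) - 1) * (((m + 2 : ℕ) : ℝ) - 2) := by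
          push_cast
          ring

lemma sum_pairs_identity {n : ℕ} (y : Fin n → ℝ) (hy : ∀ i j : Fin n, i ≠ j → y i ≠ y j) :
    ∑ i : Fin n, ∑ j ∈ Finset.univ.erase i, y i / (y i - y j)
    = (n : ℝ) * ((n : ℝ) - 1) / 2 := by
  have hswap := pair_swap (fun i j => y i / (y i - y j))
  have h2 : (∑ i : Fin n, ∑ j ∈ Finset.univ.erase i, y i / (y i - y j))
      + (∑ i : Fin n, ∑ j ∈ Finset.univ.erase i, y i / (y i - y j))
      = (n : ℝ) * ((n : ℝ) - 1) := by
    nth_rewrite 2 [hswap]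
    rw [← Finset.sum_add_distrib]
    rw [← card_sum_pairs n]
    refine Finset.sum_congr rfl fun i _ => ?_
    rw [← Finset.sum_add_distrib]
    refine Finset.sum_congr rfl fun j hj => ?_
    exact two_term_identity (hy i j (Finset.mem_erase.mp hj).1.symm)
  linarith

lemma sum_triples_identity {n : ℕ} (y : Fin n → ℝ) (hy : ∀ i j : Fin n, i ≠ j → y i ≠ y j) :
    ∑ i : Fin n, ∑ j ∈ Finset.univ.erase i, ∑ k ∈ (Finset.univ.erase i).erase j,
        y i ^ 2 / ((y i - y j) * (y i - y k))
    = (n : ℝ) * ((n : ℝ) - 1) * ((n : ℝ) - 2) / 3 := by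
  set T : Fin n → Fin n → Fin n → ℝ :=
    fun a b c => y a ^ 2 / ((y a - y b) * (y a - y c)) with hT
  have hc1 := triple_cycle T
  have hc2 := triple_cycle (fun a b c => T b c a)
  have h3 : (∑ i : Fin n, ∑ j ∈ Finset.univ.erase i, ∑ k ∈ (Finset.univ.erase i).erase j, T i j k)
      + (∑ i : Fin n, ∑ j ∈ Finset.univ.erase i, ∑ k ∈ (Finset.univ.erase i).erase j, T i j k)
      + (∑ i : Fin n, ∑ j ∈ Finset.univ.erase i, ∑ k ∈ (Finset.univ.erase i).erase j, T i j k)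
      = (n : ℝ) * ((n : ℝ) - 1) * ((n : ℝ) - 2) := by
    nth_rewrite 3 [hc1]
    nth_rewrite 2 [hc1]
    nth_rewrite 2 [hc2]
    rw [← card_sum_triples n]
    rw [← Finset.sum_add_distrib, ← Finset.sum_add_distrib]
    refine Finset.sum_congr rfl fun i _ => ?_
    rw [← Finset.sum_add_distrib, ← Finset.sum_add_distrib]
    refine Finset.sum_congr rfl fun j hj => ?_
    rw [← Finset.sum_add_distrib, ← Finset.sum_add_distrib]
    refine Finset.sum_congr rfl fun k hk => ?_
    have hji : j ≠ i := (Finset.mem_erase.mp hj).1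
    have hkj : k ≠ j := (Finset.mem_erase.mp hk).1
    have hki : k ≠ i := (Finset.mem_erase.mp (Finset.mem_erase.mp hk).2).1
    exact three_term_identity (hy i j hji.symm) (hy i k hki.symm) (hy j k hkj.symm)
  linarith

lemma per_index {n : ℕ} (x : Fin n → ℝ) (hx : ∀ i j : Fin n, i ≠ j → x i ≠ x j)
    (h : (Fin n → ℝ) → ℝ)
    (hh : ∀ y : Fin n → ℝ, h y = ∏ j : Fin n, ∏ k ∈ Finset.Iio j, (y j - y k))
    (f : (Fin n → ℝ) → ℝ) (i : Fin n)
    (hFev : ∀ᶠ t in nhds (x i), DifferentiableAt ℝ (fun t => f (Function.update x i t)) t)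
    (hFd : DifferentiableAt ℝ (deriv fun t => f (Function.update x i t)) (x i)) :
    deriv (fun t => h (Function.update x i t) * f (Function.update x i t)) (x i)
      = h x * ((∑ j ∈ Finset.univ.erase i, (x i - x j)⁻¹) * f x
          + deriv (fun t => f (Function.update x i t)) (x i))
    ∧ iteratedDeriv 2 (fun t => h (Function.update x i t) * f (Function.update x i t)) (x i)
      = h x * ((∑ j ∈ Finset.univ.erase i, ∑ k ∈ (Finset.univ.erase i).erase j,
            (x i - x j)⁻¹ * (x i - x k)⁻¹) * f x
          + 2 * ((∑ j ∈ Finset.univ.erase i, (x i - x j)⁻¹)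
              * deriv (fun t => f (Function.update x i t)) (x i))
          + deriv (deriv fun t => f (Function.update x i t)) (x i)) := by
  classical
  obtain ⟨K, hK⟩ := vandermonde_update x i
  set F : ℝ → ℝ := fun t => f (Function.update x i t) with hF
  set P : ℝ → ℝ := fun t => ∏ j ∈ Finset.univ.erase i, (t - x j) with hP
  set P1 : ℝ → ℝ := fun t => ∑ j ∈ Finset.univ.erase i,
      ∏ k ∈ (Finset.univ.erase i).erase j, (t - x k) with hP1
  set P2 : ℝ → ℝ := fun t => ∑ j ∈ Finset.univ.erase i, ∑ k ∈ (Finset.univ.erase i).erase j,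
      ∏ l ∈ ((Finset.univ.erase i).erase j).erase k, (t - x l) with hP2
  have hxsub : ∀ j ∈ Finset.univ.erase i, x i - x j ≠ 0 := fun j hj =>
    sub_ne_zero.mpr (hx i j (Finset.mem_erase.mp hj).1.symm)
  have hGF : (fun t => h (Function.update x i t) * f (Function.update x i t))
      = fun t => K * (P t * F t) := by
    funext t
    rw [hh (Function.update x i t), hK t]
    ring
  obtain ⟨hd1, hd2⟩ := key_deriv_mul (P := P) (P1 := P1) (P2 := P2) (F := F) (a := x i)
    (fun t => hasDerivAt_prod_linear x _ t)
    (fun t => hasDerivAt_sum_prod_linear x _ t) hFev hFd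
  have hFx : F (x i) = f x := by rw [hF]; simp [Function.update_eq_self]
  have hPD : P (x i) = ∏ j ∈ Finset.univ.erase i, (x i - x j) := rfl
  have hhxK : h x = K * ∏ j ∈ Finset.univ.erase i, (x i - x j) := by
    have := hK (x i)
    rw [Function.update_eq_self] at this
    rw [hh x, this]
  have hQ1 : P1 (x i) = (∏ j ∈ Finset.univ.erase i, (x i - x j))
      * ∑ j ∈ Finset.univ.erase i, (x i - x j)⁻¹ := by
    rw [hP1, Finset.mul_sum]
    refine Finset.sum_congr rfl fun j hj => ?_
    rw [← Finset.mul_prod_erase (Finset.univ.erase i) (fun k => x i - x k) hj,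
      mul_comm (x i - x j), mul_assoc, mul_inv_cancel₀ (hxsub j hj), mul_one]
  have hQ2 : P2 (x i) = (∏ j ∈ Finset.univ.erase i, (x i - x j))
      * ∑ j ∈ Finset.univ.erase i, ∑ k ∈ (Finset.univ.erase i).erase j,
          (x i - x j)⁻¹ * (x i - x k)⁻¹ := by
    rw [hP2, Finset.mul_sum]
    refine Finset.sum_congr rfl fun j hj => ?_
    rw [Finset.mul_sum]
    refine Finset.sum_congr rfl fun k hk => ?_
    have hkmem : k ∈ Finset.univ.erase i := (Finset.mem_erase.mp hk).2
    rw [← Finset.mul_prod_erase (Finset.univ.erase i) (fun k => x i - x k) hj,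
      ← Finset.mul_prod_erase ((Finset.univ.erase i).erase j) (fun k => x i - x k) hk]
    have h1 := hxsub j hj
    have h2 := hxsub k hkmem
    field_simp
  constructor
  · rw [hGF, deriv_const_mul_field, hd1, hFx, hhxK, hQ1, hPD]
    ring
  · have hit : iteratedDeriv 2 (fun t => K * (P t * F t)) (x i)
        = K * iteratedDeriv 2 (fun t => P t * F t) (x i) := by
      simp [iteratedDeriv_succ, iteratedDeriv_one, deriv_const_mul_field']
    rw [hGF, hit, hd2, hFx, hhxK, hQ1, hQ2, hPD]
    ring

/-- The quantum Calogero–Sutherland Hamiltonian at coupling `θ = 1` coincides with the Doob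
h-transform by the Vandermonde determinant of the generator of `n` independent geometric
Brownian motions with drift parameter `1/2`, minus the eigenvalue
`c = (n(n-1)/2)·(1/2 + (n-2)/3)`. -/
theorem calogero_sutherland_is_htransform_of_geometric_BM (n : ℕ) (hn : 1 ≤ n)
    (Ω : Set (Fin n → ℝ)) (hΩ : Ω = {x : Fin n → ℝ | ∀ i j : Fin n, i ≠ j → x i ≠ x j})
    (h : (Fin n → ℝ) → ℝ)
    (hh : ∀ x : Fin n → ℝ, h x = ∏ j : Fin n, ∏ i ∈ Finset.Iio j, (x j - x i))
    (c : ℝ) (hc : c = ((n : ℝ) * ((n : ℝ) - 1) / 2) * (1 / 2 + ((n : ℝ) - 2) / 3))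
    (f : (Fin n → ℝ) → ℝ) (hf : ContDiffOn ℝ 2 f Ω) :
    ∀ x ∈ Ω,
      (1 / h x) *
          ((∑ i : Fin n, (1 / 2 : ℝ) * (x i) ^ 2 *
              iteratedDeriv 2
                (fun t => h (Function.update x i t) * f (Function.update x i t)) (x i))
            + (1 / 2 : ℝ) * ∑ i : Fin n, x i *
                deriv (fun t => h (Function.update x i t) * f (Function.update x i t)) (x i))
        - c * f x
      = (1 / 2 : ℝ) * ∑ i : Fin n,
            ((x i) ^ 2 * iteratedDeriv 2 (fun t => f (Function.update x i t)) (x i)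
              + x i * deriv (fun t => f (Function.update x i t)) (x i))
        + ∑ i : Fin n, ∑ j ∈ Finset.univ.erase i,
            ((x i) ^ 2 / (x i - x j)) * deriv (fun t => f (Function.update x i t)) (x i) := by
  classical
  -- openness of Ω
  have hΩopen : IsOpen Ω := by
    rw [hΩ]
    have hset : {x : Fin n → ℝ | ∀ i j : Fin n, i ≠ j → x i ≠ x j}
        = ⋂ (i : Fin n), ⋂ (j : Fin n), {x : Fin n → ℝ | i ≠ j → x i ≠ x j} := by
      ext z
      simp [Set.mem_iInter]
    rw [hset]
    refine isOpen_iInter_of_finite fun i => isOpen_iInter_of_finite fun j => ?_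
    by_cases hij : i = j
    · subst hij
      have : {x : Fin n → ℝ | i ≠ i → x i ≠ x i} = Set.univ := by
        ext z; simp
      rw [this]
      exact isOpen_univ
    · have : {x : Fin n → ℝ | i ≠ j → x i ≠ x j} = {x : Fin n → ℝ | x i ≠ x j} := by
        ext z; simp [hij]
      rw [this]
      exact isOpen_ne_fun (continuous_apply i) (continuous_apply j)
  intro x hxΩ
  have hx : ∀ i j : Fin n, i ≠ j → x i ≠ x j := by
    rw [hΩ] at hxΩ
    exact hxΩ
  have hxsub : ∀ i : Fin n, ∀ j ∈ Finset.univ.erase i, x i - x j ≠ 0 := fun i j hj =>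
    sub_ne_zero.mpr (hx i j (Finset.mem_erase.mp hj).1.symm)
  have hhx : h x ≠ 0 := by
    rw [hh]
    refine Finset.prod_ne_zero_iff.mpr fun j _ => Finset.prod_ne_zero_iff.mpr fun k hk => ?_
    exact sub_ne_zero.mpr (hx j k (Finset.mem_Iio.mp hk).ne')
  -- differentiability facts
  have hFC : ∀ i : Fin n, ContDiffAt ℝ 2 (fun t => f (Function.update x i t)) (x i) := by
    intro i
    have h1 : ContDiffAt ℝ 2 f (Function.update x i (x i)) := by
      rw [Function.update_eq_self]
      exact hf.contDiffAt (hΩopen.mem_nhds hxΩ)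
    have h2 : ContDiffAt ℝ 2 (Function.update x i) (x i) := (contDiff_update 2 x i).contDiffAt
    have := h1.comp (x i) h2
    exact this
  have hud : ∀ i : Fin n,
      (∀ᶠ t in nhds (x i), DifferentiableAt ℝ (fun t => f (Function.update x i t)) t)
      ∧ DifferentiableAt ℝ (deriv fun t => f (Function.update x i t)) (x i) := by
    intro i
    obtain ⟨u, huo, hxu, hcu⟩ := (hFC i).contDiffOn' le_rfl (by simp)
    rw [Set.insert_eq_of_mem (Set.mem_univ _), Set.univ_inter] at hcu
    constructor
    · filter_upwards [huo.mem_nhds hxu] with t ht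
      exact (hcu.differentiableOn (by norm_num)).differentiableAt (huo.mem_nhds ht)
    · have hderiv : ContDiffOn ℝ 1 (deriv fun t => f (Function.update x i t)) u :=
        hcu.deriv_of_isOpen huo (by norm_num)
      exact (hderiv.differentiableOn one_ne_zero).differentiableAt (huo.mem_nhds hxu)
  have hper := fun i : Fin n => per_index x hx h hh f i (hud i).1 (hud i).2
  -- abbreviations
  set Q1 : Fin n → ℝ := fun i => ∑ j ∈ Finset.univ.erase i, (x i - x j)⁻¹ with hQ1def
  set Q2 : Fin n → ℝ := fun i => ∑ j ∈ Finset.univ.erase i,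
      ∑ k ∈ (Finset.univ.erase i).erase j, (x i - x j)⁻¹ * (x i - x k)⁻¹ with hQ2def
  set F' : Fin n → ℝ := fun i => deriv (fun t => f (Function.update x i t)) (x i) with hF'def
  set F'' : Fin n → ℝ := fun i =>
    deriv (deriv fun t => f (Function.update x i t)) (x i) with hF''def
  -- rewrite the operator sums using hper
  have hsum1 : (∑ i : Fin n, (1 / 2 : ℝ) * (x i) ^ 2 *
        iteratedDeriv 2
          (fun t => h (Function.update x i t) * f (Function.update x i t)) (x i))
      = ∑ i : Fin n, (1 / 2 : ℝ) * (x i) ^ 2 *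
          (h x * (Q2 i * f x + 2 * (Q1 i * F' i) + F'' i)) := by
    refine Finset.sum_congr rfl fun i _ => ?_
    rw [(hper i).2]
  have hsum2 : (∑ i : Fin n, x i *
        deriv (fun t => h (Function.update x i t) * f (Function.update x i t)) (x i))
      = ∑ i : Fin n, x i * (h x * (Q1 i * f x + F' i)) := by
    refine Finset.sum_congr rfl fun i _ => ?_
    rw [(hper i).1]
  have hit2 : ∀ i : Fin n,
      iteratedDeriv 2 (fun t => f (Function.update x i t)) (x i) = F'' i := fun i => by
    simp [iteratedDeriv_succ, iteratedDeriv_one, hF''def]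
  rw [hsum1, hsum2]
  -- eigenvalue identities
  have HB : ∑ i : Fin n, x i * Q1 i = (n : ℝ) * ((n : ℝ) - 1) / 2 := by
    rw [← sum_pairs_identity x hx]
    refine Finset.sum_congr rfl fun i _ => ?_
    rw [hQ1def, Finset.mul_sum]
    exact Finset.sum_congr rfl fun j _ => (div_eq_mul_inv _ _).symm
  have HA : ∑ i : Fin n, (x i) ^ 2 * Q2 i
      = (n : ℝ) * ((n : ℝ) - 1) * ((n : ℝ) - 2) / 3 := by
    rw [← sum_triples_identity x hx]
    refine Finset.sum_congr rfl fun i _ => ?_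
    rw [hQ2def, Finset.mul_sum]
    refine Finset.sum_congr rfl fun j _ => ?_
    rw [Finset.mul_sum]
    refine Finset.sum_congr rfl fun k _ => ?_
    rw [div_eq_mul_inv, mul_inv]
  -- cross term
  have HC : ∑ i : Fin n, ∑ j ∈ Finset.univ.erase i, ((x i) ^ 2 / (x i - x j)) * F' i
      = ∑ i : Fin n, (x i) ^ 2 * Q1 i * F' i := by
    refine Finset.sum_congr rfl fun i _ => ?_
    rw [hQ1def, Finset.mul_sum, Finset.sum_mul]
    refine Finset.sum_congr rfl fun j _ => ?_
    rw [div_eq_mul_inv]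
  rw [show (∑ i : Fin n,
        ((x i) ^ 2 * iteratedDeriv 2 (fun t => f (Function.update x i t)) (x i)
          + x i * deriv (fun t => f (Function.update x i t)) (x i)))
      = ∑ i : Fin n, ((x i) ^ 2 * F'' i + x i * F' i) from
    Finset.sum_congr rfl fun i _ => by rw [hit2 i]]
  rw [HC]
  -- final algebra
  have hL : (1 / h x) * ((∑ i : Fin n, (1 / 2 : ℝ) * (x i) ^ 2 *
        (h x * (Q2 i * f x + 2 * (Q1 i * F' i) + F'' i)))
        + (1 / 2 : ℝ) * ∑ i : Fin n, x i * (h x * (Q1 i * f x + F' i)))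
      = (1 / 2 : ℝ) * f x * (∑ i : Fin n, (x i) ^ 2 * Q2 i)
        + (∑ i : Fin n, (x i) ^ 2 * Q1 i * F' i)
        + (1 / 2 : ℝ) * (∑ i : Fin n, (x i) ^ 2 * F'' i)
        + (1 / 2 : ℝ) * f x * (∑ i : Fin n, x i * Q1 i)
        + (1 / 2 : ℝ) * (∑ i : Fin n, x i * F' i) := by
    simp only [Finset.mul_sum, ← Finset.sum_add_distrib]
    refine Finset.sum_congr rfl fun i _ => ?_
    field_simp
    ring
  have hR : (1 / 2 : ℝ) * (∑ i : Fin n, ((x i) ^ 2 * F'' i + x i * F' i))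
      = (1 / 2 : ℝ) * (∑ i : Fin n, (x i) ^ 2 * F'' i)
        + (1 / 2 : ℝ) * (∑ i : Fin n, x i * F' i) := by
    simp only [Finset.mul_sum, ← Finset.sum_add_distrib]
    refine Finset.sum_congr rfl fun i _ => ?_
    ring
  rw [hL, hR, HA, HB, hc]
  ring
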